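/- Simes' inequality: Let p_1 ≤ p_2 ≤ ... ≤ p_M be the order statistics of M independent random variables each uniformly distributed on [0,1]. Then for any α ∈ [0,1], the probability that p_m < (m/M)·α for at least one m ∈ {1,...,M} equals α. -/

import Mathlib

open MeasureTheory

namespace SimesProof
open Finset

noncomputable def Ff (S : ℕ → ℕ) (n : ℕ) : ℤ := (n : ℤ) - ∑ t ∈ range n, (S t : ℤ)

lemma Ff_succ (S : ℕ → ℕ) (n : ℕ) : Ff S (n + 1) = Ff S n + 1 - S n := by
  simp [Ff, Finset.sum_range_succ]; ring

lemma Ff_succ_le (S : ℕ → ℕ) (n : ℕ) : Ff S (n + 1) ≤ Ff S n + 1 := by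
  rw [Ff_succ]; have : (0:ℤ) ≤ S n := Int.ofNat_nonneg _; omega

lemma window_sum {S : ℕ → ℕ} {M : ℕ} (hM : 1 ≤ M) (hper : ∀ n, S (n + M) = S n) (n : ℕ) :
    ∑ t ∈ Ico n (n + M), S t = ∑ t ∈ range M, S t := by
  induction n with
  | zero => rw [Nat.zero_add, ← Finset.range_eq_Ico]
  | succ n ih =>
    have he : n+1+M = (n+M)+1 := by omega
    have h1 : ∑ t ∈ Ico (n+1) (n+1+M), S t = (∑ t ∈ Ico (n+1) (n+M), S t) + S (n + M) := by
      rw [he, Finset.sum_Ico_succ_top (by omega)]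
    have h2 : ∑ t ∈ Ico n (n+M), S t = S n + ∑ t ∈ Ico (n+1) (n+M), S t := by
      rw [Finset.sum_eq_sum_Ico_succ_bot (by omega)]
    rw [h1, hper n, ← ih, h2]; omega

lemma Ff_split (S : ℕ → ℕ) (a b : ℕ) (h : a ≤ b) :
    Ff S b = Ff S a + ((b - a : ℕ) : ℤ) - ∑ t ∈ Ico a b, (S t : ℤ) := by
  have hs : ∑ t ∈ range b, (S t:ℤ) = ∑ t ∈ range a, (S t:ℤ) + ∑ t ∈ Ico a b, (S t:ℤ) := by
    rw [Finset.range_eq_Ico, Finset.range_eq_Ico,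
      Finset.sum_Ico_consecutive _ (Nat.zero_le a) h]
  unfold Ff
  rw [hs]
  push_cast [h]
  ring

lemma Ff_add_M {S : ℕ → ℕ} {M s : ℕ} (hM : 1 ≤ M) (hper : ∀ n, S (n + M) = S n)
    (hsum : ∑ t ∈ range M, S t = s) (n : ℕ) :
    Ff S (n + M) = Ff S n + ((M : ℤ) - s) := by
  rw [Ff_split S n (n+M) (by omega)]
  have h2 : ∑ t ∈ Ico n (n + M), (S t : ℤ) = (s : ℤ) := by
    rw [← Nat.cast_sum, window_sum hM hper, hsum]
  rw [h2]
  have : (n + M - n : ℕ) = M := by omega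
  rw [this]
  ring

lemma records_count {M s : ℕ} (hM : 1 ≤ M) {S : ℕ → ℕ}
    (hper : ∀ n, S (n + M) = S n) (hsum : ∑ t ∈ range M, S t = s) (hs : s < M) :
    ((range M).filter
      (fun c => ∀ m < M, (∑ r ∈ range (m+1), S (c + r)) ≤ m)).card = M - s := by
  classical
  set d : ℕ := M - s with hd
  have hd1 : 1 ≤ d := by omega
  have hD : ∀ n, Ff S (n + M) = Ff S n + (d : ℤ) := by
    intro n
    rw [Ff_add_M hM hper hsum]
    have : ((M:ℤ) - s) = (d:ℤ) := by omega
    rw [this]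
  -- lower bound on Ff over one period
  have hlowr : ∀ r, r ≤ M → -(s:ℤ) ≤ Ff S r := by
    intro r hr
    have h1 : ∑ t ∈ range r, S t ≤ s := by
      rw [← hsum]
      exact Finset.sum_le_sum_of_subset (Finset.range_subset_range.mpr hr)
    have h2 : (∑ t ∈ range r, (S t : ℤ)) = ((∑ t ∈ range r, S t : ℕ) : ℤ) := by
      rw [Nat.cast_sum]
    unfold Ff
    rw [h2]
    have : ((∑ t ∈ range r, S t : ℕ) : ℤ) ≤ (s:ℤ) := by exact_mod_cast h1
    omega
  have hkM : ∀ k n, Ff S (n + k * M) = Ff S n + (k:ℤ) * d := by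
    intro k
    induction k with
    | zero => intro n; simp
    | succ k ih =>
      intro n
      have : n + (k+1) * M = (n + k * M) + M := by ring
      rw [this, hD, ih]
      push_cast
      ring
  have hlb : ∀ n, ((n / M : ℕ):ℤ) * d - s ≤ Ff S n := by
    intro n
    have hn : n = n % M + (n / M) * M := by
      rw [Nat.add_comm]; exact (Nat.div_add_mod' n M).symm
    calc ((n / M : ℕ):ℤ) * d - s ≤ Ff S (n % M) + ((n / M : ℕ):ℤ) * d := by
          have := hlowr (n % M) (le_of_lt (Nat.mod_lt n hM))
          omega
      _ = Ff S n := by rw [← hkM]; rw [← hn]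
  have hbd : ∀ (v:ℤ) n, Ff S n ≤ v → n < M * ((v+s).toNat) + M := by
    intro v n h
    have h1 := hlb n
    have hq : ((n / M : ℕ):ℤ) ≤ v + s := by
      have : ((n / M : ℕ):ℤ) * 1 ≤ ((n / M : ℕ):ℤ) * d := by
        apply mul_le_mul_of_nonneg_left (by exact_mod_cast hd1) (by positivity)
      omega
    have hq2 : n / M ≤ (v + s).toNat := by
      omega
    have hmul : M * (n / M) ≤ M * ((v+s).toNat) := Nat.mul_le_mul_left _ hq2
    have hdm : M * (n / M) + n % M = n := Nat.div_add_mod n M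
    have hr : n % M < M := Nat.mod_lt n hM
    omega
  obtain ⟨v₀, ⟨n₀, hn₀⟩, hleast⟩ :
      ∃ v₀ : ℤ, (∃ n, Ff S n = v₀) ∧ ∀ v, (∃ n, Ff S n = v) → v₀ ≤ v := by
    apply Int.exists_least_of_bdd
    · refine ⟨-(s:ℤ), ?_⟩
      rintro z ⟨n, rfl⟩
      have h1 := hlb n
      have : (0:ℤ) ≤ ((n / M : ℕ):ℤ) * d := by positivity
      omega
    · exact ⟨Ff S 0, 0, rfl⟩
  have hv₀le : ∀ n, v₀ ≤ Ff S n := fun n => hleast _ ⟨n, rfl⟩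
  set B : ℕ → ℕ := fun k => M * ((v₀ + k + s).toNat) + M with hB
  set T : ℕ → ℕ := fun k => Nat.findGreatest (fun n => Ff S n ≤ v₀ + k) (B k) with hT
  have hTle : ∀ k, Ff S (T k) ≤ v₀ + k := by
    intro k
    have h0 : Ff S n₀ ≤ v₀ + k := by rw [hn₀]; omega
    have hn₀B : n₀ ≤ B k := le_of_lt (hbd (v₀ + k) n₀ h0)
    have hspec := Nat.findGreatest_spec (P := fun n => Ff S n ≤ v₀ + (k:ℤ)) hn₀B h0
    exact hspec
  have hTmax : ∀ (k n : ℕ), Ff S n ≤ v₀ + k → n ≤ T k := by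
    intro k n h
    exact Nat.le_findGreatest (le_of_lt (hbd (v₀ + k) n h)) h
  have hFT : ∀ k, Ff S (T k) = v₀ + k := by
    intro k
    have h1 : ¬ (Ff S (T k + 1) ≤ v₀ + k) := by
      intro h
      have := hTmax k _ h
      omega
    have h2 := Ff_succ_le S (T k)
    have := hTle k
    omega
  have hTR : ∀ k m, T k < m → Ff S (T k) < Ff S m := by
    intro k m hm
    by_contra hcon
    push_neg at hcon
    have : Ff S m ≤ v₀ + k := le_trans hcon (hTle k)
    have := hTmax k m this
    omega
  have hTmono : StrictMono T := by
    apply strictMono_nat_of_lt_succ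
    intro k
    have hle : T k ≤ T (k+1) := by
      apply hTmax
      rw [hFT]
      push_cast
      omega
    rcases lt_or_eq_of_le hle with h | h
    · exact h
    · exfalso
      have := hFT k
      have h2 := hFT (k+1)
      rw [← h] at h2
      rw [this] at h2
      push_cast at h2
      omega
  have hTd : T d = T 0 + M := by
    have hge : T 0 + M ≤ T d := by
      apply hTmax
      rw [hD, hFT]
      push_cast
      omega
    have hle : T d ≤ T 0 + M := by
      by_contra hcon
      push_neg at hcon
      have hm : M ≤ T d := by omega
      have h1 : Ff S (T d) = Ff S (T d - M) + d := by
        rw [← hD (T d - M)]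
        congr 1
        omega
      have h2 : Ff S (T d - M) ≤ v₀ + 0 := by
        have := hFT d
        push_cast at this ⊢
        omega
      have := hTmax 0 _ h2
      omega
    omega
  -- R is the record predicate
  set R : ℕ → Prop := fun n => ∀ m, n < m → Ff S n < Ff S m with hR
  have hRwin : ∀ n, (∀ m, n < m → m ≤ n + M → Ff S n < Ff S m) → R n := by
    intro n h m
    induction m using Nat.strong_induction_on with
    | _ m ih =>
      intro hm
      by_cases hcase : m ≤ n + M
      · exact h m hm hcase
      · have hmM : M ≤ m := by omega
        have h1 : Ff S m = Ff S (m - M) + d := by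
          rw [← hD (m - M)]
          congr 1
          omega
        have h2 := ih (m - M) (by omega) (by omega)
        omega
  have hRper : ∀ n, R (n + M) ↔ R n := by
    intro n
    constructor
    · intro h m hm
      have := h (m + M) (by omega)
      rw [hD, hD] at this
      omega
    · intro h
      apply hRwin
      intro m hm1 hm2
      have h1 : Ff S m = Ff S (m - M) + d := by
        rw [← hD (m - M)]; congr 1; omega
      have h2 := h (m - M) (by omega)
      rw [hD]
      omega
  -- the filter condition is equivalent to R
  have cond_iff1 : ∀ c m : ℕ, ((∑ r ∈ range (m+1), S (c + r)) ≤ m ↔ Ff S c < Ff S (c+m+1)) := by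
    intro c m
    have hsp := Ff_split S c (c+m+1) (by omega)
    have he : ∑ t ∈ Ico c (c+m+1), (S t : ℤ) = ∑ r ∈ range (m+1), (S (c + r) : ℤ) := by
      rw [Finset.sum_Ico_eq_sum_range]
      have h' : c + m + 1 - c = m + 1 := by omega
      rw [h']
    have hc : ∑ r ∈ range (m+1), (S (c+r) : ℤ) = ((∑ r ∈ range (m+1), S (c + r) : ℕ) : ℤ) := by
      rw [Nat.cast_sum]
    rw [he, hc] at hsp
    have hsub : ((c+m+1) - c : ℕ) = m + 1 := by omega
    rw [hsub] at hsp
    constructor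
    · intro h
      have : ((∑ r ∈ range (m+1), S (c + r) : ℕ) : ℤ) ≤ (m:ℤ) := by exact_mod_cast h
      push_cast at hsp
      omega
    · intro h
      have : ((∑ r ∈ range (m+1), S (c + r) : ℕ) : ℤ) ≤ (m:ℤ) := by
        push_cast at hsp
        omega
      exact_mod_cast this
  have cond_iff : ∀ c, ((∀ m < M, (∑ r ∈ range (m+1), S (c + r)) ≤ m) ↔ R c) := by
    intro c
    constructor
    · intro h
      apply hRwin
      intro m hm1 hm2
      have hmm : m - c - 1 < M := by omega
      have := (cond_iff1 c (m - c - 1)).mp (h _ hmm)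
      have he : c + (m - c - 1) + 1 = m := by omega
      rwa [he] at this
    · intro h m hm
      exact (cond_iff1 c m).mpr (h (c+m+1) (by omega))
  have hfeq : (range M).filter (fun c => ∀ m < M, (∑ r ∈ range (m+1), S (c + r)) ≤ m)
      = (range M).filter R := by
    apply Finset.filter_congr
    intro c _
    simp only [cond_iff]
  rw [hfeq]
  -- count records in [0, M) = count in [T 0, T 0 + M)
  have hcardwin : ((range M).filter R).card = ((Ico (T 0) (T 0 + M)).filter R).card := by
    have hind : ∀ n, (fun n => if R n then 1 else 0) (n + M) = (fun n => if R n then 1 else 0) n := by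
      intro n
      simp only [hRper n]
    have h1 := window_sum (S := fun n => if R n then 1 else 0) hM hind (T 0)
    rw [Finset.card_filter, Finset.card_filter]
    exact h1.symm
  rw [hcardwin]
  have hset : (Ico (T 0) (T 0 + M)).filter R = (range d).image T := by
    ext n
    simp only [Finset.mem_filter, Finset.mem_Ico, Finset.mem_image, Finset.mem_range]
    constructor
    · rintro ⟨⟨hn1, hn2⟩, hRn⟩
      have hge : v₀ ≤ Ff S n := hv₀le n
      set k : ℕ := (Ff S n - v₀).toNat with hk
      have hkval : Ff S n = v₀ + k := by
        rw [hk]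
        omega
      have hnT : n = T k := by
        have h1 : n ≤ T k := hTmax k n (by omega)
        rcases lt_or_eq_of_le h1 with h | h
        · exfalso
          have := hRn (T k) h
          rw [hFT] at this
          omega
        · exact h
      refine ⟨k, ?_, hnT.symm⟩
      have : T k < T d := by rw [hTd]; omega
      exact hTmono.lt_iff_lt.mp this
    · rintro ⟨k, hk, rfl⟩
      refine ⟨⟨?_, ?_⟩, ?_⟩
      · exact hTmono.monotone (Nat.zero_le k)
      · rw [← hTd]
        exact hTmono hk
      · intro m hm
        exact hTR k m hm
  rw [hset, Finset.card_image_of_injective _ hTmono.injective, Finset.card_range]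

variable {M : ℕ}

def lowc (g : Fin M → Fin (M+1)) : ℕ := (univ.filter fun i => (g i : ℕ) < M).card

def goodf (g : Fin M → Fin (M+1)) : Prop :=
  ∀ m : Fin M, ((univ.filter fun i => (g i : ℕ) ≤ (m : ℕ)).card ≤ (m : ℕ))

instance : DecidablePred (goodf (M := M)) := fun _ => by unfold goodf; infer_instance

def shiftf (c : ℕ) (g : Fin M → Fin (M+1)) : Fin M → Fin (M+1) :=
  fun i => if h : (g i : ℕ) < M
    then ⟨((g i : ℕ) + c) % M, lt_trans (Nat.mod_lt _ (by omega)) (Nat.lt_succ_self M)⟩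
    else g i

lemma shiftf_low_val {c : ℕ} {g : Fin M → Fin (M+1)} {i : Fin M} (h : (g i : ℕ) < M) :
    (shiftf c g i : ℕ) = ((g i : ℕ) + c) % M := by
  unfold shiftf; rw [dif_pos h]

lemma shiftf_high_val {c : ℕ} {g : Fin M → Fin (M+1)} {i : Fin M} (h : ¬ (g i : ℕ) < M) :
    shiftf c g i = g i := by
  unfold shiftf; rw [dif_neg h]

lemma shiftf_shiftf (c c' : ℕ) (g : Fin M → Fin (M+1)) :
    shiftf c' (shiftf c g) = shiftf (c + c') g := by
  funext i
  by_cases h : (g i : ℕ) < M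
  · have hM : 1 ≤ M := by omega
    have h2 : ((shiftf c g) i : ℕ) < M := by
      rw [shiftf_low_val h]; exact Nat.mod_lt _ (by omega)
    apply Fin.ext
    rw [shiftf_low_val h2, shiftf_low_val h, shiftf_low_val h, Nat.mod_add_mod]
    congr 1
    ring
  · have h2 : ¬ ((shiftf c g) i : ℕ) < M := by rw [shiftf_high_val h]; exact h
    rw [shiftf_high_val h2, shiftf_high_val h, shiftf_high_val h]

lemma shiftf_self (c : ℕ) (hc : c % M = 0) (g : Fin M → Fin (M+1)) :
    shiftf c g = g := by
  funext i
  by_cases h : (g i : ℕ) < M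
  · apply Fin.ext
    rw [shiftf_low_val h, Nat.add_mod, hc, Nat.add_zero, Nat.mod_mod_of_dvd _ dvd_rfl,
      Nat.mod_eq_of_lt h]
  · rw [shiftf_high_val h]

lemma lowc_shiftf (c : ℕ) (g : Fin M → Fin (M+1)) : lowc (shiftf c g) = lowc g := by
  unfold lowc
  congr 1
  apply Finset.filter_congr
  intro i _
  by_cases h : (g i : ℕ) < M
  · have hM : 1 ≤ M := by omega
    rw [shiftf_low_val h]
    simp [h, Nat.mod_lt _ (show 0 < M by omega)]
  · rw [shiftf_high_val h]

def Sg (g : Fin M → Fin (M+1)) (t : ℕ) : ℕ :=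
  (univ.filter fun i => (g i : ℕ) < M ∧ (g i : ℕ) = t % M).card

lemma Sg_per (g : Fin M → Fin (M+1)) (t : ℕ) : Sg g (t + M) = Sg g t := by
  simp [Sg, Nat.add_mod_right]

lemma Sg_sum (hM : 1 ≤ M) (g : Fin M → Fin (M+1)) :
    ∑ t ∈ range M, Sg g t = lowc g := by
  unfold Sg lowc
  simp_rw [Finset.card_filter]
  rw [Finset.sum_comm]
  apply Finset.sum_congr rfl
  intro i _
  by_cases h : (g i : ℕ) < M
  · rw [if_pos h]
    have hstep : ∀ t ∈ range M, (if (g i : ℕ) < M ∧ (g i : ℕ) = t % M then 1 else 0)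
        = (if t = (g i : ℕ) then 1 else 0) := by
      intro t ht
      have htM := Finset.mem_range.mp ht
      rw [Nat.mod_eq_of_lt htM]
      by_cases he : t = (g i : ℕ)
      · simp [he, h]
      · have h1 : ¬((g i : ℕ) < M ∧ (g i : ℕ) = t) := by
          rintro ⟨-, h2⟩; exact he h2.symm
        rw [if_neg h1, if_neg he]
    rw [Finset.sum_congr rfl hstep, Finset.sum_ite_eq' (range M) ((g i : ℕ)) (fun _ => 1)]
    rw [if_pos (Finset.mem_range.mpr h)]
  · rw [if_neg h]
    apply Finset.sum_eq_zero
    intro t _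
    simp [h]

lemma mod_cancel (hM : 1 ≤ M) {c' c : ℕ} (r : ℕ) (hcc : (c' + c) % M = 0) (hr : r < M) :
    (c' + r + c) % M = r := by
  have h1 : c' + r + c = (c' + c) + r := by ring
  rw [h1, Nat.add_mod, hcc, Nat.zero_add, Nat.mod_mod_of_dvd _ dvd_rfl, Nat.mod_eq_of_lt hr]

lemma key_r (hM : 1 ≤ M) (v c m : ℕ) (hv : v < M) (hc : c < M) (hm : m < M) :
    ((range (m+1)).filter fun r => v = ((M - c) % M + r) % M).card
      = if (v + c) % M ≤ m then 1 else 0 := by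
  set c' := (M - c) % M with hc'
  have hcc : (c' + c) % M = 0 := by
    rw [hc', Nat.mod_add_mod]
    have he : M - c + c = M := by omega
    rw [he, Nat.mod_self]
  have hfwd : ∀ r < M, v = (c' + r) % M → (v + c) % M = r := by
    intro r hr he
    rw [he, Nat.mod_add_mod, mod_cancel hM r hcc hr]
  by_cases h : (v + c) % M ≤ m
  · rw [if_pos h]
    have hset : (range (m+1)).filter (fun r => v = (c' + r) % M) = {(v + c) % M} := by
      ext r
      simp only [Finset.mem_filter, Finset.mem_range, Finset.mem_singleton]
      constructor
      · rintro ⟨hr1, hr2⟩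
        exact (hfwd r (by omega) hr2).symm
      · rintro rfl
        refine ⟨by omega, ?_⟩
        rw [Nat.add_mod_mod]
        have he : c' + (v + c) = c' + v + c := by ring
        rw [he, mod_cancel hM v hcc hv]
    rw [hset, Finset.card_singleton]
  · rw [if_neg h]
    rw [Finset.card_eq_zero, Finset.filter_eq_empty_iff]
    intro r hr
    intro he
    have := hfwd r (by have := Finset.mem_range.mp hr; omega) he
    have hrm := Finset.mem_range.mp hr
    omega

lemma count_shift (hM : 1 ≤ M) (g : Fin M → Fin (M+1)) (c m : ℕ) (hc : c < M) (hm : m < M) :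
    (univ.filter fun i => ((shiftf c g i : ℕ) ≤ m)).card
      = ∑ r ∈ range (m+1), Sg g ((M - c) % M + r) := by
  set c' := (M - c) % M with hc'
  have hL : (univ.filter fun i => ((shiftf c g i : ℕ) ≤ m)).card
      = (univ.filter fun i => ((g i : ℕ) < M ∧ ((g i : ℕ) + c) % M ≤ m)).card := by
    congr 1
    apply Finset.filter_congr
    intro i _
    by_cases h : (g i : ℕ) < M
    · rw [shiftf_low_val h]
      simp [h]
    · rw [shiftf_high_val h]
      simp only [h, false_and, iff_false]
      push_neg at h ⊢
      omega
  rw [hL, Finset.card_filter]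
  have hR : ∀ r, Sg g (c' + r) = ∑ i : Fin M, (if (g i : ℕ) < M ∧ (g i : ℕ) = (c' + r) % M then 1 else 0) := by
    intro r
    rw [Sg, Finset.card_filter]
  simp_rw [hR]
  rw [Finset.sum_comm]
  apply Finset.sum_congr rfl
  intro i _
  by_cases h : (g i : ℕ) < M
  · simp only [h, true_and]
    rw [← Finset.card_filter]
    exact (key_r hM (g i) c m h hc hm).symm
  · simp [h]

lemma minus_mod_invol (hM : 1 ≤ M) (c : ℕ) (hc : c < M) : (M - (M - c) % M) % M = c := by
  rcases Nat.eq_zero_or_pos c with rfl | hcpos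
  · simp [Nat.mod_self]
  · have h1 : (M - c) % M = M - c := Nat.mod_eq_of_lt (by omega)
    rw [h1]
    have h2 : M - (M - c) = c := by omega
    rw [h2, Nat.mod_eq_of_lt hc]

lemma goodf_shift_iff (hM : 1 ≤ M) (g : Fin M → Fin (M+1)) (c : ℕ) (hc : c < M) :
    goodf (shiftf c g) ↔ ∀ m < M, (∑ r ∈ range (m+1), Sg g ((M - c) % M + r)) ≤ m := by
  constructor
  · intro h m hm
    have h2 := h ⟨m, hm⟩
    rw [count_shift hM g c m hc hm] at h2
    exact h2
  · intro h m
    have h2 := h (m : ℕ) m.isLt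
    rw [← count_shift hM g c (m : ℕ) hc m.isLt] at h2
    exact h2

lemma shift_count (hM : 1 ≤ M) (g : Fin M → Fin (M+1)) :
    ((range M).filter fun c => goodf (shiftf c g)).card = M - lowc g := by
  classical
  by_cases hlow : lowc g = M
  · have hall : ∀ i, (g i : ℕ) < M := by
      have huniv : (univ.filter fun i => (g i : ℕ) < M) = univ := by
        apply Finset.eq_univ_of_card
        rw [show ((univ.filter fun i => (g i : ℕ) < M).card) = lowc g from rfl, hlow,
          Fintype.card_fin]
      intro i
      have hmem : i ∈ (univ.filter fun i => (g i : ℕ) < M) := by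
        rw [huniv]; exact Finset.mem_univ i
      exact (Finset.mem_filter.mp hmem).2
    have hnone : ∀ c, ¬ goodf (shiftf c g) := by
      intro c hgood
      have hm := hgood ⟨M-1, by omega⟩
      have huniv2 : (univ.filter fun i => ((shiftf c g i : ℕ) ≤ M-1)) = univ := by
        rw [Finset.eq_univ_iff_forall]
        intro i
        rw [Finset.mem_filter]
        refine ⟨Finset.mem_univ i, ?_⟩
        rw [shiftf_low_val (hall i)]
        have := Nat.mod_lt ((g i : ℕ) + c) (show 0 < M by omega)
        omega
      rw [huniv2] at hm
      simp only [Finset.card_univ, Fintype.card_fin] at hm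
      omega
    rw [Finset.filter_false_of_mem (fun c _ => hnone c), Finset.card_empty]
    omega
  · have hlt : lowc g < M := by
      have hle : lowc g ≤ M := by
        have := Finset.card_filter_le (univ : Finset (Fin M)) (fun i => (g i : ℕ) < M)
        simpa [lowc, Finset.card_univ] using this
      omega
    have hrec := records_count hM (S := Sg g) (Sg_per g) (Sg_sum hM g) hlt
    rw [← hrec]
    apply Finset.card_bij' (i := fun c _ => (M - c) % M) (j := fun c' _ => (M - c') % M)
    · intro c hcmem
      rw [Finset.mem_filter] at hcmem ⊢
      obtain ⟨hcr, hcg⟩ := hcmem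
      have hclt := Finset.mem_range.mp hcr
      refine ⟨Finset.mem_range.mpr (Nat.mod_lt _ (by omega)), ?_⟩
      exact (goodf_shift_iff hM g c hclt).mp hcg
    · intro c' hcmem
      rw [Finset.mem_filter] at hcmem ⊢
      obtain ⟨hcr, hcg⟩ := hcmem
      have hclt := Finset.mem_range.mp hcr
      refine ⟨Finset.mem_range.mpr (Nat.mod_lt _ (by omega)), ?_⟩
      set c := (M - c') % M with hcdef
      have hclt2 : c < M := Nat.mod_lt _ (by omega)
      apply (goodf_shift_iff hM g c hclt2).mpr
      rw [hcdef, minus_mod_invol hM c' hclt]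
      exact hcg
    · intro c hcmem
      have hclt := Finset.mem_range.mp (Finset.mem_filter.mp hcmem).1
      exact minus_mod_invol hM c hclt
    · intro c' hcmem
      have hclt := Finset.mem_range.mp (Finset.mem_filter.mp hcmem).1
      exact minus_mod_invol hM c' hclt


lemma shiftf_bijective (hM : 1 ≤ M) (c : ℕ) (hc : c < M) :
    Function.Bijective (shiftf (M := M) c) := by
  rw [Function.bijective_iff_has_inverse]
  refine ⟨shiftf ((M - c) % M), ?_, ?_⟩
  · intro g
    rw [shiftf_shiftf]
    apply shiftf_self
    rw [Nat.add_comm, Nat.mod_add_mod]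
    have he : M - c + c = M := by omega
    rw [he, Nat.mod_self]
  · intro g
    rw [shiftf_shiftf]
    apply shiftf_self
    rw [Nat.mod_add_mod]
    have he : M - c + c = M := by omega
    rw [he, Nat.mod_self]

lemma goodf_sum (hM : 1 ≤ M) (a b : ℝ) :
    ∑ g ∈ univ.filter (goodf (M := M)), a ^ lowc g * b ^ (M - lowc g)
      = b * ((M:ℝ) * a + b) ^ (M - 1) := by
  classical
  set W : (Fin M → Fin (M+1)) → ℝ := fun g => a ^ lowc g * b ^ (M - lowc g) with hW
  -- Step A: reindexing by the shift
  have stepA : ∀ c < M, ∑ g : Fin M → Fin (M+1), (if goodf (shiftf c g) then W g else 0)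
      = ∑ g : Fin M → Fin (M+1), (if goodf g then W g else 0) := by
    intro c hc
    apply Fintype.sum_bijective (shiftf c) (shiftf_bijective hM c hc)
    intro g
    have hWs : W (shiftf c g) = W g := by
      rw [hW]; simp only [lowc_shiftf]
    rw [hWs]
  -- Step B: double counting
  have stepB : ∑ c ∈ range M, ∑ g : Fin M → Fin (M+1), (if goodf (shiftf c g) then W g else 0)
      = (M : ℝ) * ∑ g ∈ univ.filter (goodf (M := M)), W g := by
    rw [Finset.sum_congr rfl (fun c hc => stepA c (Finset.mem_range.mp hc))]
    rw [Finset.sum_const, Finset.card_range, nsmul_eq_mul]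
    congr 1
    rw [Finset.sum_filter]
  have stepB2 : ∑ c ∈ range M, ∑ g : Fin M → Fin (M+1), (if goodf (shiftf c g) then W g else 0)
      = ∑ g : Fin M → Fin (M+1), ((M - lowc g : ℕ) : ℝ) * W g := by
    rw [Finset.sum_comm]
    apply Finset.sum_congr rfl
    intro g _
    have h1 : ∑ c ∈ range M, (if goodf (shiftf c g) then W g else 0)
        = ∑ c ∈ (range M).filter (fun c => goodf (shiftf c g)), W g := by
      rw [Finset.sum_filter]
    rw [h1, Finset.sum_const, shift_count hM g, nsmul_eq_mul]
  -- Step C: the free sum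
  have hWprod : ∀ g : Fin M → Fin (M+1), W g = ∏ i, (if ((g i : ℕ)) < M then a else b) := by
    intro g
    rw [hW]
    rw [← Finset.prod_filter_mul_prod_filter_not univ (fun i => (g i : ℕ) < M)]
    have hp1 : ∏ i ∈ univ.filter (fun i => (g i : ℕ) < M), (if ((g i : ℕ)) < M then a else b)
        = a ^ lowc g := by
      rw [Finset.prod_congr rfl (fun i hi => if_pos (Finset.mem_filter.mp hi).2),
        Finset.prod_const, lowc]
    have hp2 : ∏ i ∈ univ.filter (fun i => ¬ (g i : ℕ) < M), (if ((g i : ℕ)) < M then a else b)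
        = b ^ (M - lowc g) := by
      rw [Finset.prod_congr rfl (fun i hi => if_neg (Finset.mem_filter.mp hi).2),
        Finset.prod_const]
      congr 1
      have hc2 := Finset.card_filter_add_card_filter_not
        (s := (univ : Finset (Fin M))) (p := fun i => (g i : ℕ) < M)
      simp only [Finset.card_univ, Fintype.card_fin, not_lt] at hc2
      simp only [not_lt, lowc]
      omega
    rw [hp1, hp2]
  have hcnt : ∀ g : Fin M → Fin (M+1), ((M - lowc g : ℕ) : ℝ)
      = ∑ i : Fin M, (if (g i : ℕ) = M then (1:ℝ) else 0) := by
    intro g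
    have h2 : (univ.filter (fun i : Fin M => (g i : ℕ) = M)).card = M - lowc g := by
      have heq : (univ.filter (fun i : Fin M => (g i : ℕ) = M))
          = (univ.filter (fun i : Fin M => ¬ (g i : ℕ) < M)) := by
        apply Finset.filter_congr
        intro i _
        have := (g i).isLt
        constructor
        · intro h; omega
        · intro h; omega
      rw [heq]
      have hc2 := Finset.card_filter_add_card_filter_not
        (s := (univ : Finset (Fin M))) (p := fun i => (g i : ℕ) < M)
      simp only [Finset.card_univ, Fintype.card_fin, not_lt] at hc2
      simp only [not_lt, lowc]
      omega
    rw [← h2, Finset.card_filter]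
    push_cast
    apply Finset.sum_congr rfl
    intro i _
    split <;> norm_num
  have stepC : ∑ g : Fin M → Fin (M+1), ((M - lowc g : ℕ) : ℝ) * W g
      = (M : ℝ) * (b * ((M:ℝ) * a + b) ^ (M - 1)) := by
    have h1 : ∀ g : Fin M → Fin (M+1), ((M - lowc g : ℕ) : ℝ) * W g
        = ∑ i : Fin M, ∏ j : Fin M,
            (if j = i then (if (g j : ℕ) = M then b else 0) else (if ((g j : ℕ)) < M then a else b)) := by
      intro g
      rw [hcnt g, hWprod g, Finset.sum_mul]
      apply Finset.sum_congr rfl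
      intro i _
      by_cases h : (g i : ℕ) = M
      · rw [if_pos h, one_mul]
        apply Finset.prod_congr rfl
        intro j _
        by_cases hj : j = i
        · rw [if_pos hj, hj, if_pos h, if_neg (by omega)]
        · rw [if_neg hj]
      · rw [if_neg h, zero_mul]
        symm
        apply Finset.prod_eq_zero (Finset.mem_univ i)
        rw [if_pos rfl, if_neg h]
    rw [Finset.sum_congr rfl (fun g _ => h1 g)]
    rw [Finset.sum_comm]
    have h2 : ∀ i : Fin M, ∑ g : Fin M → Fin (M+1), ∏ j : Fin M,
        (if j = i then (if (g j : ℕ) = M then b else 0) else (if ((g j : ℕ)) < M then a else b))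
        = b * ((M:ℝ) * a + b) ^ (M - 1) := by
      intro i
      have h3 := Finset.prod_univ_sum (fun _ : Fin M => (univ : Finset (Fin (M+1))))
        (fun j v => (if j = i then (if (v : ℕ) = M then b else 0) else (if ((v : ℕ)) < M then a else b)))
      rw [Fintype.piFinset_univ] at h3
      rw [← h3]
      have h4 : ∀ j : Fin M, ∑ v : Fin (M+1),
          (if j = i then (if (v : ℕ) = M then b else 0) else (if ((v : ℕ)) < M then a else b))
          = if j = i then b else ((M:ℝ) * a + b) := by
        intro j
        by_cases hj : j = i
        · simp only [hj, eq_self_iff_true, if_true]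
          rw [Fin.sum_univ_castSucc]
          have hz : ∀ v : Fin M, (if ((Fin.castSucc v : Fin (M+1)) : ℕ) = M then b else 0) = 0 := by
            intro v
            rw [if_neg]
            have := v.isLt
            simp only [Fin.coe_castSucc]
            omega
          rw [Finset.sum_congr rfl (fun v _ => hz v), Finset.sum_const_zero, zero_add]
          rw [if_pos (by simp [Fin.val_last])]
        · simp only [hj, if_false]
          rw [Fin.sum_univ_castSucc]
          have hz : ∀ v : Fin M, (if ((Fin.castSucc v : Fin (M+1)) : ℕ) < M then a else b) = a := by
            intro v
            rw [if_pos]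
            simpa using v.isLt
          rw [Finset.sum_congr rfl (fun v _ => hz v), Finset.sum_const, Finset.card_univ,
            Fintype.card_fin, if_neg (by simp [Fin.val_last]), nsmul_eq_mul]
      rw [Finset.prod_congr rfl (fun j _ => h4 j)]
      rw [← Finset.mul_prod_erase univ _ (Finset.mem_univ i), if_pos rfl]
      congr 1
      have h5 : ∀ j ∈ univ.erase i, (if j = i then b else ((M:ℝ) * a + b)) = ((M:ℝ) * a + b) := by
        intro j hj
        rw [if_neg (Finset.mem_erase.mp hj).1]
      rw [Finset.prod_congr rfl h5, Finset.prod_const, Finset.card_erase_of_mem (Finset.mem_univ i),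
        Finset.card_univ, Fintype.card_fin]
    rw [Finset.sum_congr rfl (fun i _ => h2 i), Finset.sum_const, Finset.card_univ,
      Fintype.card_fin, nsmul_eq_mul]
  have hM0 : (M : ℝ) ≠ 0 := by positivity
  apply mul_left_cancel₀ hM0
  rw [← stepB, stepB2, stepC]

end SimesProof

open MeasureTheory

lemma unif_prob : IsProbabilityMeasure (volume.restrict (Set.Icc (0:ℝ) 1)) := ⟨by
  rw [Measure.restrict_apply_univ, Real.volume_Icc]; norm_num⟩

/-- Simes' inequality (equality case for independent uniforms): if `U 1, ..., U M` are i.i.d.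
uniform random variables on `[0,1]` and `p 1 ≤ ... ≤ p M` denote their increasing rearrangement,
then for any `α ∈ [0,1]` the probability that `p m < (m/M)·α` for at least one `m` equals `α`.
(The event that the `m`-th order statistic is `< c` is the event that at least `m` of the
variables are `< c`.) -/
theorem simes_equality {Ω : Type*} [MeasurableSpace Ω]
    (μ : Measure Ω) [IsProbabilityMeasure μ] (M : ℕ) (hM : 1 ≤ M)
    (U : Fin M → Ω → ℝ) (hmeas : ∀ i, Measurable (U i))
    (hindep : ProbabilityTheory.iIndepFun U μ)
    (hunif : ∀ i, Measure.map (U i) μ = (volume.restrict (Set.Icc (0 : ℝ) 1)))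
    (α : ℝ) (hα : α ∈ Set.Icc (0 : ℝ) 1) :
    (μ {ω | ∃ m : Fin M, ((m : ℕ) + 1) ≤
        (Finset.univ.filter (fun i : Fin M => U i ω < (((m : ℕ) + 1) / M) * α)).card }).toReal
      = α := by
  classical
  haveI : IsProbabilityMeasure (volume.restrict (Set.Icc (0:ℝ) 1)) := unif_prob
  obtain ⟨hα0, hα1⟩ := hα
  set ν : Measure (Fin M → ℝ) :=
    Measure.pi (fun _ : Fin M => volume.restrict (Set.Icc (0:ℝ) 1)) with hν
  haveI : IsProbabilityMeasure ν := by rw [hν]; infer_instance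
  set E : Set (Fin M → ℝ) := {u | ∃ m : Fin M, ((m : ℕ) + 1) ≤
      (Finset.univ.filter (fun i : Fin M => u i < (((m : ℕ) + 1) / M) * α)).card} with hE
  have hEmeas : MeasurableSet E := by
    have h1 : E = ⋃ m : Fin M,
        (fun u : Fin M → ℝ =>
          (Finset.univ.filter (fun i : Fin M => u i < (((m : ℕ) + 1) / M) * α)).card)
          ⁻¹' (Set.Ici ((m : ℕ) + 1)) := by
      ext u
      simp only [hE, Set.mem_setOf_eq, Set.mem_iUnion, Set.mem_preimage, Set.mem_Ici]
    rw [h1]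
    apply MeasurableSet.iUnion
    intro m
    have hNm : Measurable (fun u : Fin M → ℝ =>
        (Finset.univ.filter (fun i : Fin M => u i < (((m : ℕ) + 1) / M) * α)).card) := by
      have h2 : (fun u : Fin M → ℝ =>
          (Finset.univ.filter (fun i : Fin M => u i < (((m : ℕ) + 1) / M) * α)).card)
          = fun u => ∑ i : Fin M, if u i < (((m : ℕ) + 1) / M) * α then 1 else 0 := by
        funext u
        rw [Finset.card_filter]
      rw [h2]
      apply Finset.measurable_sum
      intro i _
      exact Measurable.ite (measurableSet_lt (measurable_pi_apply i) measurable_const)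
        measurable_const measurable_const
    exact hNm MeasurableSet.of_discrete
  have hFmeas : Measurable (fun ω (i : Fin M) => U i ω) := measurable_pi_iff.mpr hmeas
  have hmap : Measure.map (fun ω (i : Fin M) => U i ω) μ = ν := by
    rw [hν]
    symm
    apply Measure.pi_eq
    intro s hs
    rw [Measure.map_apply hFmeas (MeasurableSet.univ_pi hs)]
    have hpre : (fun ω (i : Fin M) => U i ω) ⁻¹' (Set.univ.pi s)
        = ⋂ i ∈ Finset.univ, (U i) ⁻¹' (s i) := by
      ext ω
      simp [Set.mem_univ_pi]
    rw [hpre, ProbabilityTheory.iIndepFun.measure_inter_preimage_eq_mul hindep Finset.univ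
      (fun i _ => hs i)]
    exact Finset.prod_congr rfl (fun i _ => by rw [← hunif i, Measure.map_apply (hmeas i) (hs i)])
  have hμν : μ {ω | ∃ m : Fin M, ((m : ℕ) + 1) ≤
      (Finset.univ.filter (fun i : Fin M => U i ω < (((m : ℕ) + 1) / M) * α)).card} = ν E := by
    rw [← hmap, Measure.map_apply hFmeas hEmeas]
    rfl
  rw [hμν]
  by_cases hzero : α = 0
  · subst hzero
    have hE0 : ν E = 0 := by
      have hsub : E ⊆ ⋃ i : Fin M, (fun u : Fin M → ℝ => u i) ⁻¹' (Set.Iio (0:ℝ)) := by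
        intro u hu
        simp only [hE, Set.mem_setOf_eq] at hu
        obtain ⟨m, hm⟩ := hu
        have hpos : 0 < (Finset.univ.filter
            (fun i : Fin M => u i < (((m : ℕ) + 1) / M) * 0)).card := by omega
        obtain ⟨i, hi⟩ := Finset.card_pos.mp hpos
        rw [Finset.mem_filter] at hi
        refine Set.mem_iUnion.mpr ⟨i, ?_⟩
        simp only [Set.mem_preimage, Set.mem_Iio]
        have h3 := hi.2
        rwa [mul_zero] at h3
      apply measure_mono_null hsub
      apply measure_iUnion_null
      intro i
      have hset : ((fun u : Fin M → ℝ => u i) ⁻¹' (Set.Iio (0:ℝ)))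
          = Set.univ.pi (fun j => if j = i then Set.Iio (0:ℝ) else Set.univ) := by
        ext u
        simp only [Set.mem_preimage, Set.mem_Iio, Set.mem_univ_pi]
        constructor
        · intro h j
          by_cases hj : j = i
          · subst hj; simp [h]
          · simp [hj]
        · intro h
          have := h i
          simpa using this
      rw [hset, hν, Measure.pi_pi]
      apply Finset.prod_eq_zero (Finset.mem_univ i)
      rw [if_pos rfl, Measure.restrict_apply measurableSet_Iio]
      have hint : Set.Iio (0:ℝ) ∩ Set.Icc 0 1 = ∅ := by
        apply Set.eq_empty_iff_forall_notMem.mpr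
        rintro x ⟨h1, h2⟩
        linarith [Set.mem_Iio.mp h1, (Set.mem_Icc.mp h2).1]
      rw [hint, measure_empty]
    rw [hE0]
    simp
  · have hαpos : 0 < α := lt_of_le_of_ne hα0 (Ne.symm hzero)
    have hM0 : (0:ℝ) < M := by exact_mod_cast hM
    set a : ℝ := α / M with ha
    have hapos : 0 < a := by positivity
    have haM : (M:ℝ) * a = α := by rw [ha]; field_simp
    set Cs : Fin (M+1) → Set ℝ := fun j =>
      if (j:ℕ) < M then Set.Ico (((j:ℕ):ℝ)*a) ((((j:ℕ):ℝ)+1)*a) else Set.Icc ((M:ℝ)*a) 1 with hCs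
    have hCmeas : ∀ j, MeasurableSet (Cs j) := by
      intro j
      simp only [hCs]
      split
      · exact measurableSet_Ico
      · exact measurableSet_Icc
    have hCsub : ∀ j, Cs j ⊆ Set.Icc (0:ℝ) 1 := by
      intro j x hx
      simp only [hCs] at hx
      by_cases hj : (j:ℕ) < M
      · rw [if_pos hj] at hx
        obtain ⟨h1, h2⟩ := hx
        have h0 : (0:ℝ) ≤ ((j:ℕ):ℝ)*a := by positivity
        have hle : ((j:ℕ):ℝ)+1 ≤ (M:ℝ) := by exact_mod_cast (show (j:ℕ)+1 ≤ M by omega)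
        have hmul := mul_le_mul_of_nonneg_right hle hapos.le
        constructor
        · linarith
        · linarith
      · rw [if_neg hj] at hx
        obtain ⟨h1, h2⟩ := hx
        have h0 : (0:ℝ) ≤ (M:ℝ)*a := by positivity
        exact ⟨by linarith, h2⟩
    have hiff : ∀ (j : Fin (M+1)) (x : ℝ), x ∈ Cs j → ∀ m : Fin M,
        (x < (((m : ℕ) + 1) / M) * α ↔ (j:ℕ) ≤ (m:ℕ)) := by
      intro j x hx m
      have hmM : (m:ℕ) < M := m.isLt
      have hth : (((m : ℕ) + 1) / M) * α = (((m:ℕ):ℝ) + 1) * a := by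
        rw [ha]; field_simp
      rw [hth]
      simp only [hCs] at hx
      by_cases hj : (j:ℕ) < M
      · rw [if_pos hj] at hx
        obtain ⟨h1, h2⟩ := hx
        constructor
        · intro hlt
          by_contra hcon
          push_neg at hcon
          have hle : ((m:ℕ):ℝ) + 1 ≤ ((j:ℕ):ℝ) := by exact_mod_cast hcon
          have hmul := mul_le_mul_of_nonneg_right hle hapos.le
          linarith
        · intro hle
          have hle2 : ((j:ℕ):ℝ) + 1 ≤ ((m:ℕ):ℝ) + 1 := by
            have : ((j:ℕ):ℝ) ≤ ((m:ℕ):ℝ) := by exact_mod_cast hle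
            linarith
          have hmul := mul_le_mul_of_nonneg_right hle2 hapos.le
          linarith
      · rw [if_neg hj] at hx
        obtain ⟨h1, h2⟩ := hx
        constructor
        · intro hlt
          exfalso
          have hle : ((m:ℕ):ℝ) + 1 ≤ (M:ℝ) := by
            exact_mod_cast (show (m:ℕ)+1 ≤ M by omega)
          have hmul := mul_le_mul_of_nonneg_right hle hapos.le
          linarith
        · intro hle
          exfalso
          have := j.isLt
          omega
    have hcard : ∀ (g : Fin M → Fin (M+1)) (u : Fin M → ℝ), (∀ i, u i ∈ Cs (g i)) →
        ∀ m : Fin M,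
          (Finset.univ.filter (fun i : Fin M => u i < (((m : ℕ) + 1) / M) * α)).card
          = (Finset.univ.filter (fun i : Fin M => (g i : ℕ) ≤ (m:ℕ))).card := by
      intro g u hu m
      congr 1
      apply Finset.filter_congr
      intro i _
      exact hiff (g i) (u i) (hu i) m
    have hEc : ∀ u : Fin M → ℝ, (u ∉ E) ↔ ∀ m : Fin M,
        (Finset.univ.filter (fun i : Fin M => u i < (((m : ℕ) + 1) / M) * α)).card ≤ (m:ℕ) := by
      intro u
      rw [hE]
      simp only [Set.mem_setOf_eq, not_exists, not_le]
      constructor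
      · intro h m; have := h m; omega
      · intro h m; have := h m; omega
    set Bg : (Fin M → Fin (M+1)) → Set (Fin M → ℝ) :=
      fun g => Set.univ.pi (fun i => Cs (g i)) with hBg
    have hBmeas : ∀ g, MeasurableSet (Bg g) :=
      fun g => MeasurableSet.univ_pi (fun i => hCmeas (g i))
    set cube : Set (Fin M → ℝ) := Set.univ.pi (fun _ : Fin M => Set.Icc (0:ℝ) 1) with hcube
    have hcubemeas : MeasurableSet cube := MeasurableSet.univ_pi (fun _ => measurableSet_Icc)
    have hcube1 : ν cube = 1 := by
      rw [hcube, hν, Measure.pi_pi]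
      have hone : ∀ i : Fin M, (volume.restrict (Set.Icc (0:ℝ) 1)) (Set.Icc (0:ℝ) 1) = 1 := by
        intro i
        rw [Measure.restrict_apply measurableSet_Icc, Set.inter_self, Real.volume_Icc]
        norm_num
      rw [Finset.prod_congr rfl (fun i _ => hone i)]
      simp
    have hcubec : ν cubeᶜ = 0 := by
      rw [prob_compl_eq_one_sub hcubemeas, hcube1, tsub_self]
    have hdecomp : Eᶜ ∩ cube = ⋃ g ∈ Finset.univ.filter (SimesProof.goodf (M := M)), Bg g := by
      ext u
      simp only [Set.mem_inter_iff, Set.mem_compl_iff, Set.mem_iUnion, exists_prop,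
        Finset.mem_filter, Finset.mem_univ, true_and]
      constructor
      · rintro ⟨hnotE, hcub⟩
        have hcub' : ∀ i, u i ∈ Set.Icc (0:ℝ) 1 := by
          intro i
          rw [hcube] at hcub
          exact (Set.mem_univ_pi.mp hcub) i
        set g : Fin M → Fin (M+1) := fun i => ⟨min M (Nat.floor (u i / a)), by omega⟩ with hg
        have hmem : ∀ i, u i ∈ Cs (g i) := by
          intro i
          obtain ⟨hu0, hu1⟩ := hcub' i
          have hdiv0 : 0 ≤ u i / a := div_nonneg hu0 hapos.le
          by_cases hflr : M ≤ Nat.floor (u i / a)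
          · have hgi : (g i : ℕ) = M := by
              simp only [hg]
              omega
            simp only [hCs]
            rw [if_neg (by omega)]
            constructor
            · have hfl2 : (M:ℝ) ≤ u i / a := by
                calc (M:ℝ) ≤ (Nat.floor (u i / a) : ℝ) := by exact_mod_cast hflr
                  _ ≤ u i / a := Nat.floor_le hdiv0
              exact (le_div_iff₀ hapos).mp hfl2
            · exact hu1
          · push_neg at hflr
            have hgi : (g i : ℕ) = Nat.floor (u i / a) := by
              simp only [hg]
              omega
            simp only [hCs]
            rw [if_pos (by omega)]
            have hmin : M ⊓ ⌊u i / a⌋₊ = ⌊u i / a⌋₊ := by omega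
            rw [hgi]
            constructor
            · have h1 : ((Nat.floor (u i / a) : ℕ):ℝ) ≤ u i / a := Nat.floor_le hdiv0
              exact (le_div_iff₀ hapos).mp h1
            · have h2 : u i / a < (Nat.floor (u i / a) : ℝ) + 1 := Nat.lt_floor_add_one _
              exact (div_lt_iff₀ hapos).mp h2
        refine ⟨g, ?_, ?_⟩
        · intro m
          have hc := hcard g u hmem m
          rw [← hc]
          exact (hEc u).mp hnotE m
        · rw [hBg]
          exact Set.mem_univ_pi.mpr (fun i => hmem i)
      · rintro ⟨g, hgood, hmemB⟩
        have hmem : ∀ i, u i ∈ Cs (g i) := by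
          rw [hBg] at hmemB
          exact fun i => (Set.mem_univ_pi.mp hmemB) i
        constructor
        · apply (hEc u).mpr
          intro m
          rw [hcard g u hmem m]
          exact hgood m
        · rw [hcube]
          exact Set.mem_univ_pi.mpr (fun i => hCsub (g i) (hmem i))
    have hCdisj : ∀ (j j' : Fin (M+1)), j ≠ j' → ∀ x, x ∈ Cs j → x ∈ Cs j' → False := by
      have haux : ∀ (j j' : Fin (M+1)), (j:ℕ) < (j':ℕ) → ∀ x, x ∈ Cs j → x ∈ Cs j' → False := by
        intro j j' hlt x hx hx'
        have hjlow : (j:ℕ) < M := by have := j'.isLt; omega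
        simp only [hCs] at hx hx'
        rw [if_pos hjlow] at hx
        obtain ⟨h1, h2⟩ := hx
        by_cases hj' : (j':ℕ) < M
        · rw [if_pos hj'] at hx'
          obtain ⟨h1', h2'⟩ := hx'
          have hle : ((j:ℕ):ℝ) + 1 ≤ ((j':ℕ):ℝ) := by exact_mod_cast hlt
          have hmul := mul_le_mul_of_nonneg_right hle hapos.le
          linarith
        · rw [if_neg hj'] at hx'
          obtain ⟨h1', h2'⟩ := hx'
          have hle : ((j:ℕ):ℝ) + 1 ≤ (M:ℝ) := by exact_mod_cast (show (j:ℕ)+1 ≤ M by omega)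
          have hmul := mul_le_mul_of_nonneg_right hle hapos.le
          linarith
      intro j j' hne x hx hx'
      have hvne : (j:ℕ) ≠ (j':ℕ) := fun h => hne (Fin.ext h)
      rcases lt_or_gt_of_ne hvne with h | h
      · exact haux j j' h x hx hx'
      · exact haux j' j h x hx' hx
    have hsum : ν (Eᶜ ∩ cube)
        = ∑ g ∈ Finset.univ.filter (SimesProof.goodf (M := M)), ν (Bg g) := by
      rw [hdecomp]
      apply measure_biUnion_finset
      · intro g hg g' hg' hne
        simp only [Function.onFun]
        rw [Set.disjoint_left]
        intro u hu hu'
        have hex : ∃ i, g i ≠ g' i := by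
          by_contra hcon
          push_neg at hcon
          exact hne (funext hcon)
        obtain ⟨i, hi⟩ := hex
        rw [hBg] at hu hu'
        exact hCdisj (g i) (g' i) hi (u i)
          ((Set.mem_univ_pi.mp hu) i) ((Set.mem_univ_pi.mp hu') i)
      · intro g _
        exact hBmeas g
    have hBval : ∀ g : Fin M → Fin (M+1), ν (Bg g)
        = ENNReal.ofReal (a ^ SimesProof.lowc g * (1-α) ^ (M - SimesProof.lowc g)) := by
      intro g
      rw [hBg, hν, Measure.pi_pi]
      have hfac : ∀ i : Fin M, (volume.restrict (Set.Icc (0:ℝ) 1)) (Cs (g i))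
          = if (g i : ℕ) < M then ENNReal.ofReal a else ENNReal.ofReal (1-α) := by
        intro i
        by_cases hj : (g i:ℕ) < M
        · rw [if_pos hj]
          simp only [hCs]
          rw [if_pos hj, Measure.restrict_apply measurableSet_Ico]
          have hsub2 : Set.Ico (((g i:ℕ):ℝ) * a) ((((g i:ℕ):ℝ)+1)*a) ⊆ Set.Icc (0:ℝ) 1 := by
            intro x hx
            obtain ⟨h1, h2⟩ := hx
            have h0 : (0:ℝ) ≤ ((g i:ℕ):ℝ)*a := by positivity
            have hle : ((g i:ℕ):ℝ)+1 ≤ (M:ℝ) := by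
              exact_mod_cast (show (g i:ℕ)+1 ≤ M by omega)
            have hmul := mul_le_mul_of_nonneg_right hle hapos.le
            exact ⟨by linarith, by linarith⟩
          rw [Set.inter_eq_left.mpr hsub2, Real.volume_Ico]
          congr 1
          ring
        · rw [if_neg hj]
          simp only [hCs]
          rw [if_neg hj, Measure.restrict_apply measurableSet_Icc]
          have hsub2 : Set.Icc ((M:ℝ)*a) 1 ⊆ Set.Icc (0:ℝ) 1 := by
            intro x hx
            obtain ⟨h1, h2⟩ := hx
            have h0 : (0:ℝ) ≤ (M:ℝ)*a := by positivity
            exact ⟨by linarith, h2⟩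
          rw [Set.inter_eq_left.mpr hsub2, Real.volume_Icc, haM]
      rw [Finset.prod_congr rfl (fun i _ => hfac i)]
      rw [← Finset.prod_filter_mul_prod_filter_not Finset.univ (fun i => (g i:ℕ) < M)]
      rw [Finset.prod_congr rfl (fun i hi => if_pos (Finset.mem_filter.mp hi).2),
          Finset.prod_congr rfl (fun i hi => if_neg (Finset.mem_filter.mp hi).2),
          Finset.prod_const, Finset.prod_const]
      have hc2 := Finset.card_filter_add_card_filter_not
        (s := (Finset.univ : Finset (Fin M))) (p := fun i => (g i:ℕ) < M)
      simp only [Finset.card_univ, Fintype.card_fin, not_lt] at hc2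
      have hlowval : (Finset.univ.filter (fun i : Fin M => (g i:ℕ) < M)).card
          = SimesProof.lowc g := rfl
      have hnotval : (Finset.univ.filter (fun i : Fin M => ¬ (g i:ℕ) < M)).card
          = M - SimesProof.lowc g := by
        simp only [not_lt]
        simp only [SimesProof.lowc] at hlowval ⊢
        omega
      rw [hlowval, hnotval]
      rw [ENNReal.ofReal_mul (by positivity), ENNReal.ofReal_pow hapos.le,
        ENNReal.ofReal_pow (by linarith)]
    have hν_compl : ν Eᶜ = ENNReal.ofReal (1 - α) := by
      have h1 : ν Eᶜ = ν (Eᶜ ∩ cube) := by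
        apply le_antisymm
        · calc ν Eᶜ ≤ ν ((Eᶜ ∩ cube) ∪ cubeᶜ) := by
                apply measure_mono
                intro x hx
                by_cases h : x ∈ cube
                · exact Or.inl ⟨hx, h⟩
                · exact Or.inr h
            _ ≤ ν (Eᶜ ∩ cube) + ν cubeᶜ := measure_union_le _ _
            _ = ν (Eᶜ ∩ cube) := by rw [hcubec, add_zero]
        · exact measure_mono Set.inter_subset_left
      rw [h1, hsum]
      rw [Finset.sum_congr rfl (fun g _ => hBval g)]
      rw [← ENNReal.ofReal_sum_of_nonneg (fun g _ =>
        mul_nonneg (pow_nonneg hapos.le _) (pow_nonneg (by linarith) _))]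
      congr 1
      have hgs := SimesProof.goodf_sum hM a (1-α)
      rw [hgs, haM]
      norm_num
    have hcomp := measure_add_measure_compl (μ := ν) hEmeas
    rw [measure_univ, hν_compl] at hcomp
    have hEfin : ν E ≠ ⊤ := (measure_lt_top ν E).ne
    have htr : (ν E).toReal + (1-α) = 1 := by
      have h2 := congrArg ENNReal.toReal hcomp
      rw [ENNReal.toReal_add hEfin ENNReal.ofReal_ne_top,
        ENNReal.toReal_ofReal (by linarith), ENNReal.toReal_one] at h2
      exact h2
    linarith
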